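/- Let Y ⊆ ℂ_p be a set, let f, f' : ℂ_p → ℂ_p be such that for every x ∈ Y, f has derivative f'(x) within Y at x, and let φ(w) = (aw + b)/(cw + d) be a homography (a, b, c, d ∈ ℂ_p, ad − bc ≠ 0) with c·f(x) + d ≠ 0 for all x ∈ Y. Let g = φ ∘ f and g'(x) = φ'(f(x))·f'(x) where φ'(w) = (ad − bc)/(cw + d)². If g is injective on Y and |(g(x) − g(y))/(x − y)|² = |g'(x) · g'(y)| for all distinct x, y ∈ Y, then |(f(x) − f(y))/(x − y)|² = |f'(x) · f'(y)| for all distinct x, y ∈ Y. -/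

import Mathlib

/-- `K` is (a field isometrically isomorphic to) the field `ℂ_p` of `p`-adic complex
numbers: a complete algebraically closed ultrametric normed field, extending `ℚ_p`
isometrically, in which the elements algebraic over `ℚ_p` are dense. -/
structure IsPadicComplexField (p : ℕ) [Fact p.Prime] (K : Type*)
    [NontriviallyNormedField K] [Algebra ℚ_[p] K] : Prop where
  isAlgClosed : IsAlgClosed K
  completeSpace : CompleteSpace K
  isUltrametricDist : IsUltrametricDist K
  norm_algebraMap : ∀ q : ℚ_[p], ‖algebraMap ℚ_[p] K q‖ = ‖q‖
  dense_algebraic : Dense {x : K | IsAlgebraic ℚ_[p] x}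

theorem norm_identity_of_homography_composition
    {p : ℕ} [Fact p.Prime] {K : Type*} [NontriviallyNormedField K] [Algebra ℚ_[p] K]
    (hK : IsPadicComplexField p K)
    (Y : Set K) (f f' : K → K)
    (hderiv : ∀ x ∈ Y, HasDerivWithinAt f (f' x) Y x)
    (a b c d : K) (hdet : a * d - b * c ≠ 0)
    (hcd : ∀ x ∈ Y, c * f x + d ≠ 0)
    (g g' : K → K)
    (hg : ∀ x, g x = (a * f x + b) / (c * f x + d))
    (hg' : ∀ x, g' x = (a * d - b * c) / (c * f x + d) ^ 2 * f' x)
    (hginj : Set.InjOn g Y)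
    (hgid : ∀ x ∈ Y, ∀ y ∈ Y, x ≠ y →
      ‖(g x - g y) / (x - y)‖ ^ 2 = ‖g' x * g' y‖) :
    ∀ x ∈ Y, ∀ y ∈ Y, x ≠ y →
      ‖(f x - f y) / (x - y)‖ ^ 2 = ‖f' x * f' y‖ := by
  intro x hx y hy hxy
  have hA := hcd x hx
  have hB := hcd y hy
  have key : g x - g y = (a * d - b * c) * (f x - f y) /
      ((c * f x + d) * (c * f y + d)) := by
    rw [hg, hg, div_sub_div _ _ hA hB]; ring
  have H := hgid x hx y hy hxy
  rw [key, hg', hg'] at H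
  have hΔ : ‖a * d - b * c‖ ≠ 0 := norm_ne_zero_iff.mpr hdet
  have hA' : ‖c * f x + d‖ ≠ 0 := norm_ne_zero_iff.mpr hA
  have hB' : ‖c * f y + d‖ ≠ 0 := norm_ne_zero_iff.mpr hB
  have hxy' : ‖x - y‖ ≠ 0 := norm_ne_zero_iff.mpr (sub_ne_zero.mpr hxy)
  simp only [norm_div, norm_mul, norm_pow] at H ⊢
  field_simp at H ⊢
  have hC : ‖a * d - b * c‖ ^ 2 * (‖c * f x + d‖ ^ 2 * ‖c * f y + d‖ ^ 2) ≠ 0 :=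
    mul_ne_zero (pow_ne_zero _ hΔ) (mul_ne_zero (pow_ne_zero _ hA') (pow_ne_zero _ hB'))
  apply mul_left_cancel₀ hC
  linear_combination (‖a * d - b * c‖ ^ 2 * (‖c * f x + d‖ ^ 2 * ‖c * f y + d‖ ^ 2)) * H
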